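/- If a finite poset P is both ε-graded and μ-graded for labelings ε, μ of its covering relations, then the order polynomials satisfy Ω(P,ε; t - r(ε)/2) = Ω(P,μ; t - r(μ)/2), i.e., Ω(P,μ;n) = Ω(P,ε; n + (r(μ)-r(ε))/2) for all integers n. -/

import Mathlib

open Polynomial

variable {P : Type*}

/-- The ε-weight of a chain `x₀ ⋖ x₁ ⋖ ⋯ ⋖ xₙ`, recorded as a list:
the sum `Σ ε(x_{i-1}, x_i)` over consecutive pairs. -/
def chainWeight (ε : P → P → ℤ) (c : List P) : ℤ :=
  ((c.zip c.tail).map fun q => ε q.1 q.2).sum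

/-- A (nonempty) saturated chain of the poset `P`, as a list of elements with
each member covered by the next. -/
def IsSatChain [PartialOrder P] (c : List P) : Prop :=
  c ≠ [] ∧ c.Chain' (· ⋖ ·)

/-- A maximal chain: a saturated chain starting at a minimal element and
ending at a maximal element. -/
def IsMaxChainL [PartialOrder P] (c : List P) : Prop :=
  IsSatChain c ∧ (∀ x ∈ c.head?, IsMin x) ∧ (∀ x ∈ c.getLast?, IsMax x)

/-- A saturated chain starting at a minimal element of `P` and ending at `x`. -/
def IsSatChainFromMinTo [PartialOrder P] (x : P) (c : List P) : Prop :=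
  IsSatChain c ∧ (∀ y ∈ c.head?, IsMin y) ∧ c.getLast? = some x

/-- `ε` takes only the values `1` and `-1` on covering relations. -/
def IsSignLabeling [PartialOrder P] (ε : P → P → ℤ) : Prop :=
  ∀ x y : P, x ⋖ y → ε x y = 1 ∨ ε x y = -1

/-- `P` is `ε`-graded of rank `r`: every maximal chain has ε-weight `r`. -/
def IsEGraded [PartialOrder P] (ε : P → P → ℤ) (r : ℤ) : Prop :=
  ∀ c : List P, IsMaxChainL c → chainWeight ε c = r

/-- A `(P,ε)`-partition: an order-reversing map `σ : P → {1,2,…}` which is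
strict on covering relations labeled `-1`. -/
def IsPPartition [PartialOrder P] (ε : P → P → ℤ) (σ : P → ℤ) : Prop :=
  (∀ x, 1 ≤ σ x) ∧ (∀ x y : P, x ≤ y → σ y ≤ σ x) ∧
  (∀ x y : P, x ⋖ y → ε x y = -1 → σ y < σ x)

/-- `Ω(P,ε;n)`: the number of `(P,ε)`-partitions with largest part at most `n`. -/
noncomputable def OmegaCount [PartialOrder P] (ε : P → P → ℤ) (n : ℕ) : ℕ :=
  Nat.card {σ : P → ℤ // IsPPartition ε σ ∧ ∀ x, σ x ≤ (n : ℤ)}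

section Aux
variable [PartialOrder P]

/-- A saturated chain from `x` to `y`. -/
def CB (x y : P) (c : List P) : Prop :=
  c.Chain' (· ⋖ ·) ∧ c.head? = some x ∧ c.getLast? = some y

lemma cb_single (x : P) : CB x x [x] := by
  refine ⟨List.isChain_singleton x, rfl, rfl⟩

lemma chainWeight_nil (ε : P → P → ℤ) : chainWeight ε [] = 0 := rfl

lemma chainWeight_single (ε : P → P → ℤ) (a : P) : chainWeight ε [a] = 0 := rfl

lemma chainWeight_cons_cons (ε : P → P → ℤ) (a b : P) (l : List P) :
    chainWeight ε (a :: b :: l) = ε a b + chainWeight ε (b :: l) := by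
  simp [chainWeight]

lemma cb_cases {x y : P} {c : List P} (h : CB x y c) :
    (x = y ∧ c = [x]) ∨ ∃ b c', x ⋖ b ∧ CB b y c' ∧ c = x :: c' := by
  obtain ⟨h1, h2, h3⟩ := h
  match c with
  | [] => simp at h2
  | [a] =>
    left
    simp at h2 h3
    subst h2; simp [h3]
  | a :: b :: t =>
    right
    simp at h2; subst h2
    refine ⟨b, b :: t, h1.rel_head, ⟨h1.tail, rfl, ?_⟩, rfl⟩
    rw [List.getLast?_cons_cons] at h3
    exact h3

lemma cb_cons {x b y : P} {c : List P} (hxb : x ⋖ b) (h : CB b y c) : CB x y (x :: c) := by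
  obtain ⟨h1, h2, h3⟩ := h
  match c with
  | [] => simp at h2
  | a :: t =>
    simp at h2; subst h2
    exact ⟨List.isChain_cons_cons.2 ⟨hxb, h1⟩, rfl, by rw [List.getLast?_cons_cons]; exact h3⟩

lemma cb_rel {f : P → ℤ} (hf : ∀ a b : P, a ⋖ b → f b ≤ f a) :
    ∀ {c : List P} {x y : P}, CB x y c → f y ≤ f x := by
  intro c
  induction c with
  | nil => intro x y h; simp [CB] at h
  | cons a l ih =>
    intro x y h
    rcases cb_cases h with ⟨rfl, _⟩ | ⟨b, c', hxb, hb, hc⟩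
    · exact le_rfl
    · simp at hc
      exact le_trans (ih (hc.2 ▸ hb)) (hf _ _ hxb)

lemma cb_le : ∀ {c : List P} {x y : P}, CB x y c → x ≤ y := by
  intro c
  induction c with
  | nil => intro x y h; simp [CB] at h
  | cons a l ih =>
    intro x y h
    rcases cb_cases h with ⟨rfl, _⟩ | ⟨b, c', hxb, hb, hc⟩
    · exact le_rfl
    · simp at hc
      exact le_trans hxb.le (ih (hc.2 ▸ hb))

lemma cb_append (ε : P → P → ℤ) :
    ∀ {c : List P} {x y z : P} {d : List P}, CB x y c → CB y z d →
      CB x z (c ++ d.tail) ∧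
        chainWeight ε (c ++ d.tail) = chainWeight ε c + chainWeight ε d := by
  intro c
  induction c with
  | nil => intro x y z d h; simp [CB] at h
  | cons a l ih =>
    intro x y z d h hd
    rcases cb_cases h with ⟨rfl, hc⟩ | ⟨b, c', hxb, hb, hc⟩
    · rw [hc]
      obtain ⟨h1, h2, h3⟩ := hd
      match d with
      | [] => simp at h2
      | w :: t =>
        simp at h2; subst h2
        simp only [List.tail_cons, List.singleton_append]
        exact ⟨⟨h1, rfl, h3⟩, by rw [chainWeight_single]; ring⟩
    · simp at hc
      obtain ⟨rfl, rfl⟩ := hc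
      obtain ⟨hcb, hw⟩ := ih hb hd
      constructor
      · exact cb_cons hxb hcb
      · obtain ⟨_, hh, _⟩ := hb
        match l with
        | [] => simp at hh
        | w :: t =>
          simp at hh; subst hh
          simp only [List.cons_append] at hw ⊢
          rw [chainWeight_cons_cons, chainWeight_cons_cons (l := t)]
          omega

end Aux

section Graded
variable [PartialOrder P] [Fintype P]

lemma exists_chain_up (x : P) : ∃ c y, CB x y c ∧ IsMax y := by
  induction x using WellFoundedGT.induction with
  | _ x ih =>
  by_cases hx : IsMax x
  · exact ⟨[x], x, cb_single x, hx⟩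
  · obtain ⟨y, hy⟩ := not_isMax_iff.1 hx
    obtain ⟨z, hz, _⟩ := hy.exists_covby_le
    obtain ⟨c, w, hc, hw⟩ := ih z hz.lt
    exact ⟨x :: c, w, cb_cons hz hc, hw⟩

lemma exists_chain_down (x : P) : ∃ c m, CB m x c ∧ IsMin m := by
  induction x using WellFoundedLT.induction with
  | _ x ih =>
  by_cases hx : IsMin x
  · exact ⟨[x], x, cb_single x, hx⟩
  · obtain ⟨y, hy⟩ := not_isMin_iff.1 hx
    obtain ⟨z, _, hz⟩ := hy.exists_le_covby
    obtain ⟨c, m, hc, hm⟩ := ih z hz.lt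
    exact ⟨c ++ [x], m, (cb_append (fun _ _ => (0:ℤ)) hc ⟨List.isChain_pair.2 hz, rfl, rfl⟩).1, hm⟩

lemma exists_chain_btw {x y : P} (hxy : x ≤ y) : ∃ c, CB x y c := by
  induction x using WellFoundedGT.induction with
  | _ x ih =>
  rcases eq_or_lt_of_le hxy with rfl | hlt
  · exact ⟨[x], cb_single x⟩
  · obtain ⟨z, hz, hzy⟩ := hlt.exists_covby_le
    obtain ⟨c, hc⟩ := ih z hz.lt hzy
    exact ⟨x :: c, cb_cons hz hc⟩

lemma pairs_cov : ∀ {c : List P}, c.Chain' (· ⋖ ·) → ∀ q ∈ c.zip c.tail, q.1 ⋖ q.2 := by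
  intro c
  induction c with
  | nil => simp
  | cons a l ih =>
    intro h q hq
    match l with
    | [] => simp at hq
    | b :: t =>
      rw [List.tail_cons, List.zip_cons_cons] at hq
      rcases List.mem_cons.1 hq with rfl | hq'
      · exact (List.isChain_cons_cons.1 h).1
      · exact ih (List.isChain_cons_cons.1 h).2 q hq'

lemma weight_diff_even (ε μ : P → P → ℤ) (hsε : IsSignLabeling ε) (hsμ : IsSignLabeling μ)
    {c : List P} (hc : c.Chain' (· ⋖ ·)) :
    2 ∣ (chainWeight ε c - chainWeight μ c) := by
  have key : ∀ l : List (P × P), ((l.map fun q => ε q.1 q.2).sum - (l.map fun q => μ q.1 q.2).sum)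
      = (l.map fun q => ε q.1 q.2 - μ q.1 q.2).sum := by
    intro l
    induction l with
    | nil => simp
    | cons q t ih => simp only [List.map_cons, List.sum_cons]; omega
  have : chainWeight ε c - chainWeight μ c
      = ((c.zip c.tail).map fun q => ε q.1 q.2 - μ q.1 q.2).sum := by
    simp only [chainWeight]; rw [← key]
  rw [this]
  refine List.dvd_sum ?_
  intro x hx
  obtain ⟨q, hq, rfl⟩ := List.mem_map.1 hx
  have hcov := pairs_cov hc q hq
  rcases hsε _ _ hcov with h1 | h1 <;> rcases hsμ _ _ hcov with h2 | h2 <;> omega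

lemma cb_last_min : ∀ {c : List P} {m x : P}, CB m x c → IsMin x → c = [x] := by
  intro c
  induction c with
  | nil => intro m x h; simp [CB] at h
  | cons a l ih =>
    intro m x h hx
    rcases cb_cases h with ⟨rfl, hc⟩ | ⟨b, c', hxb, hb, hc⟩
    · exact hc
    · simp at hc
      obtain ⟨rfl, rfl⟩ := hc
      have h3 := ih hb hx
      subst h3
      obtain ⟨_, hh, _⟩ := hb
      simp at hh
      subst hh
      exact absurd hxb.lt hx.not_lt

lemma cb_maxchain {m y : P} {c : List P} (h : CB m y c) (hm : IsMin m) (hy : IsMax y) :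
    IsMaxChainL c := by
  obtain ⟨h1, h2, h3⟩ := h
  refine ⟨⟨?_, h1⟩, ?_, ?_⟩
  · rintro rfl; simp at h2
  · intro z hz
    rw [h2, Option.mem_some_iff] at hz
    subst hz
    exact hm
  · intro z hz
    rw [h3, Option.mem_some_iff] at hz
    subst hz
    exact hy

/-- Well-definedness of rank: any two saturated chains from a minimal element to `x`
have the same weight. -/
lemma weight_eq {ε : P → P → ℤ} {r : ℤ} (hg : IsEGraded ε r)
    {m m' x : P} {c c' : List P} (h : CB m x c) (h' : CB m' x c')
    (hm : IsMin m) (hm' : IsMin m') :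
    chainWeight ε c = chainWeight ε c' := by
  obtain ⟨d, y, hd, hy⟩ := exists_chain_up x
  obtain ⟨h1, hw1⟩ := cb_append ε h hd
  obtain ⟨h2, hw2⟩ := cb_append ε h' hd
  have := hg _ (cb_maxchain h1 hm hy)
  have := hg _ (cb_maxchain h2 hm' hy)
  omega

end Graded

lemma transfer_main [PartialOrder P] [Fintype P]
    (ε μ : P → P → ℤ) (hsε : IsSignLabeling ε) (hsμ : IsSignLabeling μ)
    (g : P → ℤ) (k n : ℤ)
    (hcov : ∀ x y : P, x ⋖ y → 2*(g y - g x) = ε x y - μ x y)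
    (hmin : ∀ x : P, IsMin x → g x = k)
    (hmax : ∀ x : P, IsMax x → g x = 0)
    (σ : P → ℤ) (hσ : IsPPartition μ σ) (hb : ∀ x, σ x ≤ n) :
    IsPPartition ε (fun x => σ x + g x) ∧ ∀ x, σ x + g x ≤ n + k := by
  obtain ⟨hσ1, hσ2, hσ3⟩ := hσ
  have hweak : ∀ x y : P, x ⋖ y → σ y + g y ≤ σ x + g x := by
    intro x y h
    have hc := hcov x y h
    have hle := hσ2 x y h.le
    rcases hsε x y h with h1 | h1 <;> rcases hsμ x y h with h2 | h2
    · omega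
    · have := hσ3 x y h h2; omega
    · omega
    · have := hσ3 x y h h2; omega
  have hanti : ∀ x y : P, x ≤ y → σ y + g y ≤ σ x + g x := by
    intro x y hxy
    obtain ⟨c, hc⟩ := exists_chain_btw hxy
    exact cb_rel (f := fun x => σ x + g x) hweak hc
  refine ⟨⟨?_, hanti, ?_⟩, ?_⟩
  · intro x
    show 1 ≤ σ x + g x
    obtain ⟨c, y, hc, hy⟩ := exists_chain_up x
    have h1 := hanti x y (cb_le hc)
    have h2 := hσ1 y
    have h3 := hmax y hy
    omega
  · intro x y h h1
    show σ y + g y < σ x + g x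
    have hc := hcov x y h
    rcases hsμ x y h with h2 | h2
    · have := hσ2 x y h.le; omega
    · have := hσ3 x y h h2; omega
  · intro x
    obtain ⟨c, m, hc, hm⟩ := exists_chain_down x
    have h1 := hanti m x (cb_le hc)
    have h2 := hb m
    have h3 := hmin m hm
    omega

lemma omega_shift' [PartialOrder P] [Fintype P]
    (ε μ : P → P → ℤ) (hsε : IsSignLabeling ε) (hsμ : IsSignLabeling μ)
    (rε rμ : ℤ) (hgε : IsEGraded ε rε) (hgμ : IsEGraded μ rμ)
    (k : ℤ) (hk : 2 * k = rμ - rε) (n m : ℕ) (hm : (m : ℤ) = (n : ℤ) + k) :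
    Nat.card {σ : P → ℤ // IsPPartition μ σ ∧ ∀ x, σ x ≤ (n : ℤ)}
      = Nat.card {σ : P → ℤ // IsPPartition ε σ ∧ ∀ x, σ x ≤ (m : ℤ)} := by
  choose dc dm hdc hdm using fun x : P => exists_chain_down x
  set g : P → ℤ := fun x => (chainWeight ε (dc x) - chainWeight μ (dc x) + rμ - rε) / 2 with hg
  have heven : ∀ x : P, 2 ∣ (chainWeight ε (dc x) - chainWeight μ (dc x)) :=
    fun x => weight_diff_even ε μ hsε hsμ (hdc x).1
  have hGcov : ∀ x y : P, x ⋖ y →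
      chainWeight ε (dc y) - chainWeight μ (dc y)
        = chainWeight ε (dc x) - chainWeight μ (dc x) + (ε x y - μ x y) := by
    intro x y h
    have hxy : CB x y [x, y] := ⟨List.isChain_pair.2 h, rfl, rfl⟩
    obtain ⟨hcb, hwε⟩ := cb_append ε (hdc x) hxy
    have hwμ := (cb_append μ (hdc x) hxy).2
    have h1 := weight_eq hgε (hdc y) hcb (hdm y) (hdm x)
    have h2 := weight_eq hgμ (hdc y) hcb (hdm y) (hdm x)
    have e1 : chainWeight ε [x, y] = ε x y := by simp [chainWeight]
    have e2 : chainWeight μ [x, y] = μ x y := by simp [chainWeight]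
    omega
  have hcov : ∀ x y : P, x ⋖ y → 2 * (g y - g x) = ε x y - μ x y := by
    intro x y h
    have h1 := heven x
    have h2 := heven y
    have h3 := hGcov x y h
    simp only [hg]
    omega
  have hmin : ∀ x : P, IsMin x → g x = k := by
    intro x hx
    have h1 : dc x = [x] := cb_last_min (hdc x) hx
    simp only [hg, h1, chainWeight_single]
    omega
  have hmax : ∀ x : P, IsMax x → g x = 0 := by
    intro x hx
    have h1 := hgε _ (cb_maxchain (hdc x) (hdm x) hx)
    have h2 := hgμ _ (cb_maxchain (hdc x) (hdm x) hx)
    simp only [hg]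
    omega
  have hcov' : ∀ x y : P, x ⋖ y → 2 * ((-g y) - (-g x)) = μ x y - ε x y := by
    intro x y h; have := hcov x y h; omega
  have hmin' : ∀ x : P, IsMin x → -g x = -k := by intro x hx; have := hmin x hx; omega
  have hmax' : ∀ x : P, IsMax x → -g x = 0 := by intro x hx; have := hmax x hx; omega
  refine Nat.card_congr
    { toFun := fun s => ⟨fun x => s.1 x + g x, ?_, ?_⟩
      invFun := fun s => ⟨fun x => s.1 x + (- g x), ?_, ?_⟩
      left_inv := ?_
      right_inv := ?_ }
  · exact (transfer_main ε μ hsε hsμ g k n hcov hmin hmax s.1 s.2.1 s.2.2).1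
  · intro x
    show s.1 x + g x ≤ (m : ℤ)
    have := (transfer_main ε μ hsε hsμ g k n hcov hmin hmax s.1 s.2.1 s.2.2).2 x
    omega
  · exact (transfer_main μ ε hsμ hsε (fun x => -g x) (-k) m hcov' hmin' hmax' s.1 s.2.1 s.2.2).1
  · intro x
    show s.1 x + (- g x) ≤ (n : ℤ)
    have := (transfer_main μ ε hsμ hsε (fun x => -g x) (-k) m hcov' hmin' hmax' s.1 s.2.1 s.2.2).2 x
    omega
  · intro s; apply Subtype.ext; funext x; dsimp; ring
  · intro s; apply Subtype.ext; funext x; dsimp; ring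


/-- if `P` is both `ε`-graded and `μ`-graded then the order
polynomials satisfy `Ω(P,ε;t - r(ε)/2) = Ω(P,μ;t - r(μ)/2)`, i.e.
`Ω(P,μ;t) = Ω(P,ε;t + (r(μ)-r(ε))/2)`. -/
theorem order_polynomial_shift {P : Type*} [PartialOrder P] [Fintype P] [Nonempty P]
    (ε μ : P → P → ℤ) (hsignε : IsSignLabeling ε) (hsignμ : IsSignLabeling μ)
    (rε rμ : ℤ) (hgrε : IsEGraded ε rε) (hgrμ : IsEGraded μ rμ)
    (Ωε Ωμ : Polynomial ℚ)
    (hΩε : ∀ n : ℕ, Ωε.eval (n : ℚ) = OmegaCount ε n)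
    (hΩμ : ∀ n : ℕ, Ωμ.eval (n : ℚ) = OmegaCount μ n) :
    Ωμ = Ωε.comp (X + C (((rμ : ℚ) - rε) / 2)) := by
  obtain ⟨x0⟩ := ‹Nonempty P›
  obtain ⟨c, m0, hc, hm0⟩ := exists_chain_down x0
  obtain ⟨d, y0, hd, hy0⟩ := exists_chain_up x0
  obtain ⟨hcd, _⟩ := cb_append ε hc hd
  have hmaxc := cb_maxchain hcd hm0 hy0
  have h1 := hgrε _ hmaxc
  have h2 := hgrμ _ hmaxc
  have hdvd := weight_diff_even μ ε hsignμ hsignε hcd.1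
  obtain ⟨k, hk⟩ : ∃ k : ℤ, 2 * k = rμ - rε := by
    obtain ⟨t, ht⟩ := hdvd; exact ⟨t, by omega⟩
  have hc2 : (((rμ : ℚ) - rε) / 2) = (k : ℚ) := by
    have h3 : (rμ : ℚ) - rε = 2 * k := by exact_mod_cast hk.symm
    rw [h3]; ring
  rw [hc2]
  apply Polynomial.eq_of_infinite_eval_eq
  have hsub : (fun n : ℕ => (n : ℚ)) '' {n : ℕ | k.natAbs ≤ n} ⊆
      {x : ℚ | Polynomial.eval x Ωμ = Polynomial.eval x (Ωε.comp (X + C (k : ℚ)))} := by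
    rintro q ⟨n, hn, rfl⟩
    have hn' : k.natAbs ≤ n := hn
    have hnk : 0 ≤ (n : ℤ) + k := by omega
    set mn := ((n : ℤ) + k).toNat with hmn'
    have hmn : (mn : ℤ) = (n : ℤ) + k := Int.toNat_of_nonneg hnk
    have hcount : OmegaCount μ n = OmegaCount ε mn :=
      omega_shift' ε μ hsignε hsignμ rε rμ hgrε hgrμ k hk n mn hmn
    simp only [Set.mem_setOf_eq]
    rw [hΩμ n, hcount, Polynomial.eval_comp]
    simp only [eval_add, eval_X, eval_C]
    have hq : (n : ℚ) + k = (mn : ℚ) := by exact_mod_cast hmn.symm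
    rw [hq, hΩε mn]
  exact Set.Infinite.mono hsub
    (Set.Infinite.image (fun a _ b _ h => Nat.cast_injective h) (Set.Ici_infinite k.natAbs))
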